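/- Let σ² > 0, H > 0, H' ≥ 0, G ≥ 0, G' ≥ 0, and γ̄^T ≥ 0 be real numbers. Then the function S ↦ Real.log (1 + S * H' / (σ² + (γ̄^T * (σ² + S * G) / H) * G')) is concave on the set [0, ∞) of nonnegative reals. -/

import Mathlib

open Set Real

/-- `S ↦ 1 + S H'/(A + B S)` is concave on `[0,∞)` when `A > 0`, `B ≥ 0`, `H' ≥ 0`. -/
lemma inner_concave (A B H' : ℝ) (hA : 0 < A) (hB : 0 ≤ B) (hH' : 0 ≤ H') :
    ConcaveOn ℝ (Set.Ici (0 : ℝ)) (fun S => 1 + S * H' / (A + B * S)) := by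
  refine ⟨convex_Ici 0, ?_⟩
  intro x hx y hy a b ha hb hab
  simp only [smul_eq_mul] at *
  have hx' : (0:ℝ) ≤ x := hx
  have hy' : (0:ℝ) ≤ y := hy
  have dx : 0 < A + B * x := by positivity
  have dy : 0 < A + B * y := by positivity
  have dz : 0 < A + B * (a * x + b * y) := by positivity
  obtain rfl : b = 1 - a := by linarith
  have key : (1 + (a * x + (1 - a) * y) * H' / (A + B * (a * x + (1 - a) * y)))
      - (a * (1 + x * H' / (A + B * x)) + (1 - a) * (1 + y * H' / (A + B * y)))
      = (a * (1 - a) * A * B * H' * (x - y) ^ 2)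
        / ((A + B * (a * x + (1 - a) * y)) * ((A + B * x) * (A + B * y))) := by
    field_simp
    ring
  have hnum : 0 ≤ a * (1 - a) * A * B * H' * (x - y) ^ 2 :=
    mul_nonneg (mul_nonneg (mul_nonneg (mul_nonneg (mul_nonneg ha hb) hA.le) hB) hH')
      (sq_nonneg _)
  have := div_nonneg hnum (le_of_lt (mul_pos dz (mul_pos dx dy)))
  linarith [key, this]

theorem reduced_rate_concave
    (σ2 H H' G G' γT : ℝ)
    (hσ : 0 < σ2) (hH : 0 < H) (hH' : 0 ≤ H') (hG : 0 ≤ G) (hG' : 0 ≤ G')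
    (hγ : 0 ≤ γT) :
    ConcaveOn ℝ (Set.Ici (0 : ℝ))
      (fun S => Real.log (1 + S * H' / (σ2 + (γT * (σ2 + S * G) / H) * G'))) := by
  set A : ℝ := σ2 + γT * σ2 / H * G' with hAdef
  set B : ℝ := γT * G / H * G' with hBdef
  have hA : 0 < A := by positivity
  have hB : 0 ≤ B := by positivity
  set f : ℝ → ℝ := fun S => 1 + S * H' / (A + B * S) with hf
  have hfeq : (fun S => Real.log (1 + S * H' / (σ2 + (γT * (σ2 + S * G) / H) * G')))
      = Real.log ∘ f := by
    funext S
    have : σ2 + (γT * (σ2 + S * G) / H) * G' = A + B * S := by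
      rw [hAdef, hBdef]; field_simp; ring
    simp [hf, Function.comp, this]
  rw [hfeq]
  have hinner : ConcaveOn ℝ (Set.Ici (0 : ℝ)) f := inner_concave A B H' hA hB hH'
  have himg : f '' Set.Ici (0:ℝ) ⊆ Set.Ioi (0:ℝ) := by
    rintro _ ⟨S, hS, rfl⟩
    have hS' : (0:ℝ) ≤ S := hS
    have : 0 < A + B * S := by positivity
    have : 0 ≤ S * H' / (A + B * S) := by positivity
    simp only [hf, Set.mem_Ioi]; linarith
  have hcont : ContinuousOn f (Set.Ici (0:ℝ)) := by
    apply ContinuousOn.add continuousOn_const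
    apply ContinuousOn.div (by fun_prop) (by fun_prop)
    intro S hS
    have hS' : (0:ℝ) ≤ S := hS
    positivity
  have hconv : Convex ℝ (f '' Set.Ici (0:ℝ)) := by
    rw [convex_iff_ordConnected]
    exact ((isPreconnected_Ici).image f hcont).ordConnected
  refine ConcaveOn.comp ?_ hinner ?_
  · exact (strictConcaveOn_log_Ioi.concaveOn.subset himg hconv)
  · intro u hu v hv huv
    exact Real.log_le_log (himg hu) huv
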